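/- Let m ≥ 2, let C ⊆ ℝ^d be a finite set in general position with |C| ≤ d+1 and 0 ∈ conv(C), and let C_1, …, C_m be a partition of C into m nonempty pairwise disjoint sets. Then there exist points c'_1, …, c'_m ∈ ℝ^d such that (1) c'_i ∈ pos(C_i) and c'_i ≠ 0 for every i = 1, …, m, (2) 0 ∈ conv({c'_1, …, c'_m}), and (3) the linear span of {c'_1, …, c'_m} has dimension exactly m − 1. -/

import Mathlib

open scoped Classical

/-- A finite set `P ⊆ ℝ^d` is in *general position* if for every `k ≤ d` no
`k + 2` of its points lie in a `k`-dimensional affine subspace, and no proper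
subset of `P` contains the origin in its convex hull. -/
def GenPos {d : ℕ} (P : Finset (EuclideanSpace ℝ (Fin d))) : Prop :=
  (∀ k : ℕ, k ≤ d → ∀ S ⊆ P, S.card = k + 2 →
    ¬ ∃ A : AffineSubspace ℝ (EuclideanSpace ℝ (Fin d)),
        Module.finrank ℝ A.direction = k ∧
        (S : Set (EuclideanSpace ℝ (Fin d))) ⊆ (A : Set (EuclideanSpace ℝ (Fin d)))) ∧
  (∀ S ⊂ P, (0 : EuclideanSpace ℝ (Fin d)) ∉
    convexHull ℝ (S : Set (EuclideanSpace ℝ (Fin d))))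

/-- `posCone P` is the set of all nonnegative linear combinations of the
points of the finite set `P`. -/
def posCone {d : ℕ} (P : Finset (EuclideanSpace ℝ (Fin d))) :
    Set (EuclideanSpace ℝ (Fin d)) :=
  {x | ∃ μ : EuclideanSpace ℝ (Fin d) → ℝ,
    (∀ p ∈ P, 0 ≤ μ p) ∧ x = ∑ p ∈ P, μ p • p}

open Module

lemma exists_superspace {E : Type*} [AddCommGroup E] [Module ℝ E] [FiniteDimensional ℝ E]
    (V : Submodule ℝ E) (n : ℕ) (h1 : finrank ℝ V ≤ n) (h2 : n ≤ finrank ℝ E) :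
    ∃ W : Submodule ℝ E, V ≤ W ∧ finrank ℝ W = n := by
  induction n with
  | zero =>
    refine ⟨V, le_rfl, by omega⟩
  | succ n ih =>
    rcases Nat.lt_or_ge (finrank ℝ V) (n+1) with h | h
    · obtain ⟨W, hVW, hW⟩ := ih (by omega) (by omega)
      have hlt : finrank ℝ W < finrank ℝ E := by omega
      obtain ⟨x, hx⟩ := W.exists_of_finrank_lt hlt
      have hxW : x ∉ W := by simpa using hx 1 one_ne_zero
      have hxne : x ≠ 0 := by rintro rfl; exact hxW (Submodule.zero_mem W)
      refine ⟨W ⊔ Submodule.span ℝ {x}, hVW.trans le_sup_left, ?_⟩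
      have hinf : W ⊓ Submodule.span ℝ {x} = ⊥ := by
        rw [Submodule.eq_bot_iff]
        rintro y ⟨hyW, hyx⟩
        obtain ⟨r, rfl⟩ := Submodule.mem_span_singleton.mp hyx
        rcases eq_or_ne r 0 with rfl | hr
        · simp
        · exact absurd hyW (hx r hr)
      have := Submodule.finrank_sup_add_finrank_inf_eq W (Submodule.span ℝ {x})
      rw [hinf, finrank_bot, finrank_span_singleton hxne] at this
      omega
    · exact ⟨V, le_rfl, by omega⟩

lemma affind {d : ℕ} (C : Finset (EuclideanSpace ℝ (Fin d)))
    (hgp1 : ∀ k : ℕ, k ≤ d → ∀ S ⊆ C, S.card = k + 2 →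
      ¬ ∃ A : AffineSubspace ℝ (EuclideanSpace ℝ (Fin d)),
          Module.finrank ℝ A.direction = k ∧
          (S : Set (EuclideanSpace ℝ (Fin d))) ⊆ (A : Set (EuclideanSpace ℝ (Fin d))))
    (hcard : C.card ≤ d + 1) (h2 : 2 ≤ C.card) :
    AffineIndependent ℝ ((↑) : C → EuclideanSpace ℝ (Fin d)) := by
  by_contra h
  set n := C.card with hn
  have hcardC : Fintype.card C = (n - 2) + 2 := by
    rw [Fintype.card_coe]; omega
  have hrange : Set.range ((↑) : C → EuclideanSpace ℝ (Fin d)) = (C : Set _) := by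
    simp [Subtype.range_coe_subtype]
  have hle : finrank ℝ (vectorSpan ℝ (C : Set (EuclideanSpace ℝ (Fin d)))) ≤ n - 2 := by
    rw [← hrange]
    exact (finrank_vectorSpan_le_iff_not_affineIndependent ℝ _ hcardC).2 h
  have hEd : finrank ℝ (EuclideanSpace ℝ (Fin d)) = d := finrank_euclideanSpace_fin
  obtain ⟨W, hVW, hW⟩ := exists_superspace (vectorSpan ℝ (C : Set (EuclideanSpace ℝ (Fin d))))
    (n - 2) hle (by omega)
  obtain ⟨p₀, hp₀⟩ := Finset.card_pos.mp (by omega : 0 < C.card)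
  refine hgp1 (n - 2) (by omega) C subset_rfl (by omega) ⟨AffineSubspace.mk' p₀ W, ?_, ?_⟩
  · rw [AffineSubspace.direction_mk']; exact hW
  · intro p hp
    rw [SetLike.mem_coe, AffineSubspace.mem_mk']
    exact hVW (vsub_mem_vectorSpan ℝ hp (Finset.mem_coe.mpr hp₀))

set_option maxHeartbeats 2000000 in
theorem representatives_exist (d m : ℕ) (hm : 2 ≤ m)
    (C : Finset (EuclideanSpace ℝ (Fin d))) (hgp : GenPos C)
    (hcard : C.card ≤ d + 1)
    (h0 : (0 : EuclideanSpace ℝ (Fin d)) ∈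
      convexHull ℝ ((C : Set (EuclideanSpace ℝ (Fin d)))))
    (Cp : Fin m → Finset (EuclideanSpace ℝ (Fin d)))
    (hne : ∀ i, (Cp i).Nonempty)
    (hdisj : ∀ i j, i ≠ j → Disjoint (Cp i) (Cp j))
    (hunion : C = Finset.univ.biUnion Cp) :
    ∃ c' : Fin m → EuclideanSpace ℝ (Fin d),
      (∀ i, c' i ∈ posCone (Cp i) ∧ c' i ≠ 0) ∧
      (0 : EuclideanSpace ℝ (Fin d)) ∈ convexHull ℝ (Set.range c') ∧
      Module.finrank ℝ (Submodule.span ℝ (Set.range c')) = m - 1 := by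
  classical
  have hpd : (↑(Finset.univ : Finset (Fin m)) : Set (Fin m)).PairwiseDisjoint Cp :=
    fun i _ j _ hij => by exact hdisj i j hij
  have hsub : ∀ i, Cp i ⊆ C := by
    intro i p hp
    rw [hunion]
    exact Finset.mem_biUnion.2 ⟨i, Finset.mem_univ i, hp⟩
  have hCcard : 2 ≤ C.card := by
    have h01 : (⟨0, by omega⟩ : Fin m) ≠ ⟨1, by omega⟩ := by simp [Fin.ext_iff]
    obtain ⟨p, hp⟩ := hne ⟨0, by omega⟩
    obtain ⟨q, hq⟩ := hne ⟨1, by omega⟩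
    have hpq : p ≠ q := by
      rintro rfl
      exact Finset.disjoint_left.mp (hdisj _ _ h01) hp hq
    calc 2 = ({p, q} : Finset (EuclideanSpace ℝ (Fin d))).card := by
          rw [Finset.card_insert_of_notMem (by simpa using hpq), Finset.card_singleton]
    _ ≤ C.card := Finset.card_le_card (by
        intro x hx
        rcases Finset.mem_insert.mp hx with rfl | hx
        · exact hsub _ hp
        · rw [Finset.mem_singleton] at hx; subst hx; exact hsub _ hq)
  -- the convex combination
  obtain ⟨w, hw0, hw1, hwc⟩ := Finset.mem_convexHull'.1 h0
  -- strict positivity of weights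
  have hwpos : ∀ p ∈ C, 0 < w p := by
    intro p hp
    rcases (hw0 p hp).lt_or_eq with h | h
    · exact h
    · exfalso
      apply hgp.2 (C.erase p) (Finset.erase_ssubset hp)
      rw [Finset.mem_convexHull']
      refine ⟨w, fun y hy => hw0 y (Finset.mem_of_mem_erase hy), ?_, ?_⟩
      · rw [Finset.sum_erase _ h.symm]; exact hw1
      · rw [Finset.sum_erase _ (by rw [← h, zero_smul])]; exact hwc
  set c' : Fin m → EuclideanSpace ℝ (Fin d) := fun i => ∑ p ∈ Cp i, w p • p with hc'
  have hsum : ∑ i, c' i = 0 := by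
    rw [← hwc, hunion, Finset.sum_biUnion hpd]
  have hproper : ∀ i, Cp i ⊂ C := by
    intro i
    refine ⟨hsub i, fun hCs => ?_⟩
    have : Nontrivial (Fin m) := ⟨⟨⟨0, by omega⟩, ⟨1, by omega⟩, by simp [Fin.ext_iff]⟩⟩
    obtain ⟨j, hji⟩ := exists_ne i
    obtain ⟨q, hq⟩ := hne j
    exact Finset.disjoint_left.mp (hdisj j i hji) hq (hCs (hsub j hq))
  have hc'ne : ∀ i, c' i ≠ 0 := by
    intro i hci
    apply hgp.2 (Cp i) (hproper i)
    have hs : 0 < ∑ p ∈ Cp i, w p :=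
      Finset.sum_pos (fun p hp => hwpos p (hsub i hp)) (hne i)
    rw [Finset.mem_convexHull']
    refine ⟨fun p => w p / (∑ q ∈ Cp i, w q),
      fun y hy => div_nonneg (hw0 y (hsub i hy)) hs.le, ?_, ?_⟩
    · rw [← Finset.sum_div, div_self hs.ne']
    · have heq : ∑ y ∈ Cp i, (w y / (∑ q ∈ Cp i, w q)) • y
          = (∑ q ∈ Cp i, w q)⁻¹ • ∑ y ∈ Cp i, w y • y := by
        rw [Finset.smul_sum]
        refine Finset.sum_congr rfl fun y _ => ?_
        rw [smul_smul, div_eq_inv_mul]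
      rw [heq, show ∑ y ∈ Cp i, w y • y = 0 from hci, smul_zero]
  -- index function
  have hmpos : 0 < m := by omega
  set idx : EuclideanSpace ℝ (Fin d) → Fin m :=
    fun p => if h : ∃ i, p ∈ Cp i then h.choose else ⟨0, hmpos⟩ with hidxdef
  have hidx : ∀ i, ∀ p ∈ Cp i, idx p = i := by
    intro i p hp
    have h : ∃ j, p ∈ Cp j := ⟨i, hp⟩
    rw [hidxdef]
    simp only [dif_pos h]
    by_contra hne'
    exact Finset.disjoint_left.mp (hdisj _ i hne') h.choose_spec hp
  -- affine independence
  have haff := affind C hgp.1 hcard hCcard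
  have hkey : ∀ ν : EuclideanSpace ℝ (Fin d) → ℝ,
      (∑ p ∈ C, ν p = 0) → (∑ p ∈ C, ν p • p = 0) → ∀ p ∈ C, ν p = 0 := by
    intro ν h1 h2 p hp
    have := affineIndependent_iff.mp haff Finset.univ (fun e => ν e.1) ?_ ?_ ⟨p, hp⟩
      (Finset.mem_univ _)
    · exact this
    · rw [Finset.univ_eq_attach, Finset.sum_attach C (fun p => ν p)]; exact h1
    · rw [Finset.univ_eq_attach, Finset.sum_attach C (fun p => ν p • p)]; exact h2
  -- the linear map
  set T : (Fin m → ℝ) →ₗ[ℝ] EuclideanSpace ℝ (Fin d) :=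
    Fintype.linearCombination ℝ c' with hT
  have hTapp : ∀ a : Fin m → ℝ, T a = ∑ i, a i • c' i := fun a => rfl
  have hker : ∀ a : Fin m → ℝ, T a = 0 → ∃ t : ℝ, ∀ i, a i = t := by
    intro a ha
    set ν : EuclideanSpace ℝ (Fin d) → ℝ := fun p => a (idx p) * w p with hν
    have hsplit : ∀ i, ∑ p ∈ Cp i, ν p • p = a i • c' i := by
      intro i
      rw [hc']
      simp only
      rw [Finset.smul_sum]
      refine Finset.sum_congr rfl fun p hp => ?_
      rw [hν]
      simp only
      rw [hidx i p hp, mul_smul]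
    have hνvec : ∑ p ∈ C, ν p • p = 0 := by
      rw [hunion, Finset.sum_biUnion hpd]
      simp_rw [hsplit]
      rw [← hTapp]; exact ha
    set t : ℝ := ∑ p ∈ C, ν p with ht
    have hμ : ∀ p ∈ C, ν p - t * w p = 0 := by
      apply hkey
      · rw [Finset.sum_sub_distrib, ← Finset.mul_sum, hw1, mul_one, sub_self]
      · simp_rw [sub_smul, mul_smul]
        rw [Finset.sum_sub_distrib, hνvec, ← Finset.smul_sum, hwc, smul_zero, sub_self]
    refine ⟨t, fun i => ?_⟩
    obtain ⟨p, hp⟩ := hne i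
    have hμp := hμ p (hsub i hp)
    have hνp : ν p = a i * w p := by rw [hν]; simp only; rw [hidx i p hp]
    rw [hνp] at hμp
    have := hwpos p (hsub i hp)
    have : (a i - t) * w p = 0 := by ring_nf; ring_nf at hμp; linarith
    rcases mul_eq_zero.mp this with h | h
    · linarith [sub_eq_zero.mp h]
    · exact absurd h (hwpos p (hsub i hp)).ne'
  have honemem : T (fun _ => (1 : ℝ)) = 0 := by
    rw [hTapp]; simpa using hsum
  have hkereq : LinearMap.ker T = Submodule.span ℝ {(fun _ => (1 : ℝ) : Fin m → ℝ)} := by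
    apply le_antisymm
    · intro a ha
      obtain ⟨t, hti⟩ := hker a (LinearMap.mem_ker.mp ha)
      have : a = t • (fun _ => (1 : ℝ)) := funext fun i => by simp [hti i]
      rw [this]
      exact Submodule.smul_mem _ _ (Submodule.mem_span_singleton_self _)
    · rw [Submodule.span_le, Set.singleton_subset_iff]
      exact LinearMap.mem_ker.mpr honemem
  have hone_ne : (fun _ => (1 : ℝ) : Fin m → ℝ) ≠ 0 := by
    intro h
    have := congrFun h ⟨0, hmpos⟩
    simp at this
  have hkrank : finrank ℝ (LinearMap.ker T) = 1 := by
    rw [hkereq, finrank_span_singleton hone_ne]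
  have hrn := LinearMap.finrank_range_add_finrank_ker T
  have hdom : finrank ℝ (Fin m → ℝ) = m := by simp
  have hrange : LinearMap.range T = Submodule.span ℝ (Set.range c') := by
    rw [hT]; exact Fintype.range_linearCombination (R := ℝ) (v := c')
  refine ⟨c', fun i => ⟨⟨w, fun p hp => hw0 p (hsub i hp), rfl⟩, hc'ne i⟩, ?_, ?_⟩
  · apply mem_convexHull_of_exists_fintype (fun _ : Fin m => (m : ℝ)⁻¹) c'
    · intro i; positivity
    · rw [Finset.sum_const, Finset.card_univ, Fintype.card_fin, nsmul_eq_mul,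
        mul_inv_cancel₀ (by exact_mod_cast hmpos.ne')]
    · exact fun i => Set.mem_range_self i
    · rw [← Finset.smul_sum, hsum, smul_zero]
  · rw [← hrange]
    rw [hdom, hkrank] at hrn
    omega
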